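/- In the one-hidden-layer ReLU ANN setting with constant target α, for a gradient descent sequence Θ_{n+1} = Θ_n − γ G(Θ_n) with γ ∈ (0, (4V(Θ_0)+2)^{-1}], it holds that sup_{n∈ℕ_0} ‖Θ_n‖ ≤ (V(Θ_0))^{1/2} < ∞, that Σ_{n=0}^∞ L_∞(Θ_n) ≤ V(Θ_0)/(4γ) < ∞, and consequently limsup_{n→∞} L_∞(Θ_n) = 0. -/

import Mathlib

open MeasureTheory

noncomputable section

/-- weight parameters -/
def wp (H : ℕ) (φ : EuclideanSpace ℝ (Fin (3*H+1))) (j : Fin H) : ℝ := φ ⟨j.1, by omega⟩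
/-- bias parameters -/
def bp (H : ℕ) (φ : EuclideanSpace ℝ (Fin (3*H+1))) (j : Fin H) : ℝ := φ ⟨H + j.1, by omega⟩
/-- outer weight parameters -/
def vp (H : ℕ) (φ : EuclideanSpace ℝ (Fin (3*H+1))) (j : Fin H) : ℝ := φ ⟨2*H + j.1, by omega⟩
/-- output bias -/
def cp (H : ℕ) (φ : EuclideanSpace ℝ (Fin (3*H+1))) : ℝ := φ ⟨3*H, by omega⟩

/-- realization of the one-hidden-layer ReLU network -/
def realization (H : ℕ) (φ : EuclideanSpace ℝ (Fin (3*H+1))) (x : ℝ) : ℝ :=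
  cp H φ + ∑ j : Fin H, vp H φ j * max (wp H φ j * x + bp H φ j) 0

/-- risk with constant target α -/
def risk (H : ℕ) (α : ℝ) (φ : EuclideanSpace ℝ (Fin (3*H+1))) : ℝ :=
  ∫ y in (0:ℝ)..1, (realization H φ y - α)^2

/-- activity interval I_j^φ -/
def actSet (H : ℕ) (φ : EuclideanSpace ℝ (Fin (3*H+1))) (j : Fin H) : Set ℝ :=
  {x | x ∈ Set.Icc (0:ℝ) 1 ∧ 0 < wp H φ j * x + bp H φ j}

/-- generalized gradient G -/
def grad (H : ℕ) (α : ℝ) (φ : EuclideanSpace ℝ (Fin (3*H+1))) :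
    EuclideanSpace ℝ (Fin (3*H+1)) := WithLp.toLp 2 fun (i : Fin (3*H+1)) =>
  if h : i.1 < H then
    2 * vp H φ ⟨i.1, h⟩ * ∫ x in actSet H φ ⟨i.1, h⟩, x * (realization H φ x - α)
  else if h2 : i.1 < 2*H then
    2 * vp H φ ⟨i.1 - H, by omega⟩ * ∫ x in actSet H φ ⟨i.1 - H, by omega⟩, (realization H φ x - α)
  else if h3 : i.1 < 3*H then
    2 * ∫ x in (0:ℝ)..1,
      max (wp H φ ⟨i.1 - 2*H, by omega⟩ * x + bp H φ ⟨i.1 - 2*H, by omega⟩) 0 * (realization H φ x - α)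
  else 2 * ∫ x in (0:ℝ)..1, (realization H φ x - α)

/-- Lyapunov function V -/
def lyap (H : ℕ) (α : ℝ) (φ : EuclideanSpace ℝ (Fin (3*H+1))) : ℝ :=
  ‖φ‖^2 + (cp H φ - 2*α)^2

-- ===== auxiliary =====

lemma sum_split (H : ℕ) (f : Fin (3*H+1) → ℝ) :
    ∑ i, f i = (∑ j : Fin H, f ⟨j.1, by omega⟩) + (∑ j : Fin H, f ⟨H + j.1, by omega⟩)
      + (∑ j : Fin H, f ⟨2*H + j.1, by omega⟩) + f ⟨3*H, by omega⟩ := by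
  set g : ℕ → ℝ := fun k => if h : k < 3*H+1 then f ⟨k, h⟩ else 0 with hg
  have hgf : ∀ (k : ℕ) (h : k < 3*H+1), g k = f ⟨k, h⟩ := by
    intro k h; simp only [hg, dif_pos h]
  have h1 : ∑ i, f i = ∑ i ∈ Finset.range (3*H+1), g i := by
    rw [← Fin.sum_univ_eq_sum_range]
    exact Finset.sum_congr rfl fun i _ => by rw [hgf i.1 i.2]
  have h2 : Finset.range (3*H+1) = Finset.range (H + (H + (H+1))) := by
    congr 1; omega
  rw [h1, h2, Finset.sum_range_add, Finset.sum_range_add, Finset.sum_range_succ]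
  have e1 : ∑ j : Fin H, f ⟨j.1, by omega⟩ = ∑ x ∈ Finset.range H, g x := by
    rw [← Fin.sum_univ_eq_sum_range]
    exact Finset.sum_congr rfl fun j _ => by rw [hgf j.1 (by omega)]
  have e2 : ∑ j : Fin H, f ⟨H + j.1, by omega⟩ = ∑ x ∈ Finset.range H, g (H + x) := by
    rw [← Fin.sum_univ_eq_sum_range (fun x => g (H + x))]
    exact Finset.sum_congr rfl fun j _ => by rw [hgf (H + j.1) (by omega)]
  have e3 : ∑ j : Fin H, f ⟨2*H + j.1, by omega⟩ = ∑ x ∈ Finset.range H, g (H + (H + x)) := by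
    rw [← Fin.sum_univ_eq_sum_range (fun x => g (H + (H + x)))]
    refine Finset.sum_congr rfl fun j _ => ?_
    have : H + (H + j.1) = 2*H + j.1 := by omega
    rw [this, hgf (2*H + j.1) (by omega)]
  have e4 : g (H + (H + H)) = f ⟨3*H, by omega⟩ := by
    have : H + (H + H) = 3*H := by omega
    rw [this, hgf (3*H) (by omega)]
  rw [e1, e2, e3, e4]; ring

variable {H : ℕ} {α : ℝ} {φ : EuclideanSpace ℝ (Fin (3*H+1))}

lemma grad_w (j : Fin H) (h : j.1 < 3*H+1) :
    grad H α φ ⟨j.1, h⟩ =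
      2 * vp H φ j * ∫ x in actSet H φ j, x * (realization H φ x - α) := by
  simp only [grad, PiLp.toLp_apply, dif_pos j.2, Fin.eta]

lemma grad_b (j : Fin H) (h : H + j.1 < 3*H+1) :
    grad H α φ ⟨H + j.1, h⟩ =
      2 * vp H φ j * ∫ x in actSet H φ j, (realization H φ x - α) := by
  have h1 : ¬ (H + j.1 < H) := by omega
  have h2 : H + j.1 < 2*H := by omega
  simp only [grad, PiLp.toLp_apply, dif_neg h1, dif_pos h2, Nat.add_sub_cancel_left, Fin.eta]

lemma grad_v (j : Fin H) (h : 2*H + j.1 < 3*H+1) :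
    grad H α φ ⟨2*H + j.1, h⟩ =
      2 * ∫ x in (0:ℝ)..1, max (wp H φ j * x + bp H φ j) 0 * (realization H φ x - α) := by
  have h1 : ¬ (2*H + j.1 < H) := by omega
  have h2 : ¬ (2*H + j.1 < 2*H) := by omega
  have h3 : 2*H + j.1 < 3*H := by omega
  simp only [grad, PiLp.toLp_apply, dif_neg h1, dif_neg h2, dif_pos h3, Nat.add_sub_cancel_left, Fin.eta]

lemma grad_c (h : 3*H < 3*H+1) :
    grad H α φ ⟨3*H, h⟩ = 2 * ∫ x in (0:ℝ)..1, (realization H φ x - α) := by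
  have h1 : ¬ (3*H < H) := by omega
  have h2 : ¬ (3*H < 2*H) := by omega
  have h3 : ¬ (3*H < 3*H) := by omega
  simp only [grad, PiLp.toLp_apply, dif_neg h1, dif_neg h2, dif_neg h3]

lemma realization_cont : Continuous (realization H φ) := by
  unfold realization
  fun_prop

lemma actSet_subset (j : Fin H) : actSet H φ j ⊆ Set.Icc (0:ℝ) 1 := fun x hx => hx.1

lemma actSet_meas (j : Fin H) : MeasurableSet (actSet H φ j) := by
  have : actSet H φ j = Set.Icc (0:ℝ) 1 ∩ {x | 0 < wp H φ j * x + bp H φ j} := rfl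
  rw [this]
  exact measurableSet_Icc.inter
    (measurableSet_lt measurable_const (by fun_prop))

lemma integrableOn_of_cont {f : ℝ → ℝ} (hf : Continuous f) {S : Set ℝ}
    (hS : S ⊆ Set.Icc (0:ℝ) 1) : IntegrableOn f S := by
  exact (hf.integrableOn_Icc).mono_set hS

lemma risk_eq : risk H α φ = ∫ x in Set.Ioc (0:ℝ) 1, (realization H φ x - α)^2 := by
  rw [risk, intervalIntegral.integral_of_le zero_le_one]

lemma risk_nonneg : 0 ≤ risk H α φ := by
  rw [risk_eq]
  exact setIntegral_nonneg measurableSet_Ioc (fun x _ => sq_nonneg _)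

/-- second moment bound on subsets of [0,1] -/
lemma sq_setInt_le {S : Set ℝ} (hS : MeasurableSet S) (hsub : S ⊆ Set.Icc (0:ℝ) 1)
    {f : ℝ → ℝ} (hf : Continuous f) :
    (∫ x in S, f x)^2 ≤ ∫ x in S, (f x)^2 := by
  set C := ∫ x in S, f x with hC
  have hfin : volume S ≤ 1 := by
    calc volume S ≤ volume (Set.Icc (0:ℝ) 1) := measure_mono hsub
    _ = 1 := by simp
  have hm1 : (volume S).toReal ≤ 1 := by
    refine ENNReal.toReal_le_of_le_ofReal one_pos.le ?_
    simpa using hfin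
  have hif : IntegrableOn f S := integrableOn_of_cont hf hsub
  have hif2 : IntegrableOn (fun x => (f x)^2) S := integrableOn_of_cont (by fun_prop) hsub
  have hic : IntegrableOn (fun _ : ℝ => C^2 - 2*C*0) S := by
    exact integrableOn_const (lt_of_le_of_lt hfin (by norm_num)).ne
  have h0 : 0 ≤ ∫ x in S, (f x - C)^2 :=
    setIntegral_nonneg hS (fun x _ => sq_nonneg _)
  have hexp : ∫ x in S, (f x - C)^2
      = (∫ x in S, (f x)^2) - 2*C*C + (volume S).toReal * C^2 := by
    have : ∀ x : ℝ, (f x - C)^2 = (f x)^2 - (2*C) * f x + C^2 := by intro x; ring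
    simp_rw [this]
    rw [integral_add (by exact (hif2.sub (hif.const_mul (2*C)))) (integrableOn_const (C := C^2) (lt_of_le_of_lt hfin (by norm_num)).ne),
        integral_sub hif2 (hif.const_mul (2*C)), integral_const_mul, setIntegral_const]
    simp [smul_eq_mul, Measure.real, ← hC]; try ring
  nlinarith [sq_nonneg C]

lemma actSet_integral (j : Fin H) {g : ℝ → ℝ} (hg : Continuous g) :
    ∫ x in actSet H φ j, (wp H φ j * x + bp H φ j) * g x
      = ∫ x in Set.Ioc (0:ℝ) 1, max (wp H φ j * x + bp H φ j) 0 * g x := by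
  set A : Set ℝ := {x | 0 < wp H φ j * x + bp H φ j} with hA
  have hAm : MeasurableSet A := measurableSet_lt measurable_const (by fun_prop)
  have hind : ∀ x : ℝ, max (wp H φ j * x + bp H φ j) 0 * g x
      = A.indicator (fun x => (wp H φ j * x + bp H φ j) * g x) x := by
    intro x
    by_cases hx : 0 < wp H φ j * x + bp H φ j
    · rw [Set.indicator_of_mem (show x ∈ A from hx), max_eq_left hx.le]
    · rw [Set.indicator_of_notMem (show x ∉ A from hx), max_eq_right (not_lt.1 hx), zero_mul]
  simp_rw [hind]
  rw [setIntegral_indicator hAm]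
  have hsets : actSet H φ j =ᵐ[volume] (Set.Ioc (0:ℝ) 1 ∩ A : Set ℝ) := by
    have h1 : Set.Icc (0:ℝ) 1 =ᵐ[volume] Set.Ioc (0:ℝ) 1 := Ioc_ae_eq_Icc.symm
    have heq : actSet H φ j = Set.Icc (0:ℝ) 1 ∩ A := by
      ext x; exact ⟨fun h => ⟨h.1, h.2⟩, fun h => ⟨h.1, h.2⟩⟩
    rw [heq]
    exact MeasureTheory.ae_eq_set_inter h1 (ae_eq_refl A)
  exact setIntegral_congr_set hsets

lemma setInt_Icc_eq_Ioc {g : ℝ → ℝ} :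
    ∫ x in Set.Icc (0:ℝ) 1, g x = ∫ x in Set.Ioc (0:ℝ) 1, g x :=
  setIntegral_congr_set Ioc_ae_eq_Icc.symm

lemma cont_f : Continuous (fun x => realization H φ x - α) :=
  realization_cont.sub continuous_const

lemma realization_sum (x : ℝ) :
    ∑ j : Fin H, vp H φ j * max (wp H φ j * x + bp H φ j) 0
      = realization H φ x - cp H φ := by
  rw [realization]; ring

lemma inner_grad_eq :
    (inner ℝ φ (grad H α φ) : ℝ)
      + (cp H φ - 2*α) * grad H α φ ⟨3*H, by omega⟩ = 4 * risk H α φ := by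
  classical
  have hNc : Continuous (realization H φ) := realization_cont
  have hUsub : Set.Ioc (0:ℝ) 1 ⊆ Set.Icc (0:ℝ) 1 := Set.Ioc_subset_Icc_self
  have hinner : (inner ℝ φ (grad H α φ) : ℝ) = ∑ i, φ i * grad H α φ i := by
    simp [PiLp.inner_apply, RCLike.inner_apply, mul_comm]
  have hwp : ∀ (j : Fin H) (h : j.1 < 3*H+1), φ ⟨j.1, h⟩ = wp H φ j := fun _ _ => rfl
  have hbp : ∀ (j : Fin H) (h : H + j.1 < 3*H+1), φ ⟨H + j.1, h⟩ = bp H φ j := fun _ _ => rfl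
  have hvp : ∀ (j : Fin H) (h : 2*H + j.1 < 3*H+1), φ ⟨2*H + j.1, h⟩ = vp H φ j := fun _ _ => rfl
  have hcp : ∀ (h : 3*H < 3*H+1), φ ⟨3*H, h⟩ = cp H φ := fun _ => rfl
  rw [hinner, sum_split H (fun i => φ i * grad H α φ i)]
  simp only [hwp, hbp, hvp, hcp, grad_w, grad_b, grad_v, grad_c,
    intervalIntegral.integral_of_le (zero_le_one (α := ℝ))]
  have hAB : ∀ j : Fin H,
      wp H φ j * (2 * vp H φ j * ∫ x in actSet H φ j, x * (realization H φ x - α))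
        + bp H φ j * (2 * vp H φ j * ∫ x in actSet H φ j, (realization H φ x - α))
      = 2 * (vp H φ j * ∫ x in Set.Ioc (0:ℝ) 1,
          max (wp H φ j * x + bp H φ j) 0 * (realization H φ x - α)) := by
    intro j
    have e1 : ∫ x in actSet H φ j, (wp H φ j * x + bp H φ j) * (realization H φ x - α)
        = wp H φ j * (∫ x in actSet H φ j, x * (realization H φ x - α))
          + bp H φ j * ∫ x in actSet H φ j, (realization H φ x - α) := by
      have hfun : (fun x => (wp H φ j * x + bp H φ j) * (realization H φ x - α))
          = fun x => wp H φ j * (x * (realization H φ x - α))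
              + bp H φ j * (realization H φ x - α) := funext fun x => by ring
      rw [hfun, integral_add
        (integrableOn_of_cont (by fun_prop) (actSet_subset j))
        (integrableOn_of_cont (by fun_prop) (actSet_subset j)),
        integral_const_mul, integral_const_mul]
    rw [← actSet_integral (φ := φ) j (g := fun x => realization H φ x - α) (by fun_prop), e1]
    ring
  have h12 : (∑ j : Fin H,
        wp H φ j * (2 * vp H φ j * ∫ x in actSet H φ j, x * (realization H φ x - α)))
      + (∑ j : Fin H,
        bp H φ j * (2 * vp H φ j * ∫ x in actSet H φ j, (realization H φ x - α)))
      = 2 * ∑ j : Fin H, vp H φ j * ∫ x in Set.Ioc (0:ℝ) 1,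
          max (wp H φ j * x + bp H φ j) 0 * (realization H φ x - α) := by
    rw [← Finset.sum_add_distrib, Finset.mul_sum]
    exact Finset.sum_congr rfl fun j _ => hAB j
  have h3 : (∑ j : Fin H, vp H φ j * (2 * ∫ x in Set.Ioc (0:ℝ) 1,
        max (wp H φ j * x + bp H φ j) 0 * (realization H φ x - α)))
      = 2 * ∑ j : Fin H, vp H φ j * ∫ x in Set.Ioc (0:ℝ) 1,
          max (wp H φ j * x + bp H φ j) 0 * (realization H φ x - α) := by
    rw [Finset.mul_sum]
    exact Finset.sum_congr rfl fun j _ => by ring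
  have hS : (∑ j : Fin H, vp H φ j * ∫ x in Set.Ioc (0:ℝ) 1,
        max (wp H φ j * x + bp H φ j) 0 * (realization H φ x - α))
      = ∫ x in Set.Ioc (0:ℝ) 1, (realization H φ x - cp H φ) * (realization H φ x - α) := by
    have e3 : ∀ j : Fin H, vp H φ j * (∫ x in Set.Ioc (0:ℝ) 1,
          max (wp H φ j * x + bp H φ j) 0 * (realization H φ x - α))
        = ∫ x in Set.Ioc (0:ℝ) 1,
            vp H φ j * (max (wp H φ j * x + bp H φ j) 0 * (realization H φ x - α)) :=
      fun j => (integral_const_mul _ _).symm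
    rw [Finset.sum_congr rfl (fun j _ => e3 j),
      ← integral_finset_sum _ (fun j _ => integrableOn_of_cont (by fun_prop) hUsub)]
    congr 1; funext x
    rw [show ∑ j : Fin H, vp H φ j * (max (wp H φ j * x + bp H φ j) 0 * (realization H φ x - α))
        = (∑ j : Fin H, vp H φ j * max (wp H φ j * x + bp H φ j) 0) * (realization H φ x - α) by
          rw [Finset.sum_mul]; exact Finset.sum_congr rfl fun j _ => by ring,
      realization_sum]
  have hfinal : (∫ x in Set.Ioc (0:ℝ) 1, (realization H φ x - cp H φ) * (realization H φ x - α))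
      + (cp H φ - α) * ∫ x in Set.Ioc (0:ℝ) 1, (realization H φ x - α) = risk H α φ := by
    rw [← integral_const_mul, ← integral_add
      (integrableOn_of_cont (by fun_prop) hUsub) (integrableOn_of_cont (by fun_prop) hUsub),
      risk_eq]
    congr 1; funext x; ring
  linear_combination h12 + h3 + 4 * hS + 4 * hfinal

lemma sq_int_le_mul_risk {S : Set ℝ} (hS : MeasurableSet S) (hsub : S ⊆ Set.Icc (0:ℝ) 1)
    {g : ℝ → ℝ} (hg : Continuous g) {C : ℝ} (hC : 0 ≤ C)
    (hbd : ∀ x ∈ S, (g x)^2 ≤ C * (realization H φ x - α)^2) :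
    (∫ x in S, g x)^2 ≤ C * risk H α φ := by
  have hNc : Continuous (realization H φ) := realization_cont
  calc (∫ x in S, g x)^2 ≤ ∫ x in S, (g x)^2 := sq_setInt_le hS hsub hg
    _ ≤ ∫ x in S, C * (realization H φ x - α)^2 :=
        setIntegral_mono_on (integrableOn_of_cont (by fun_prop) hsub)
          (integrableOn_of_cont (by fun_prop) hsub) hS hbd
    _ ≤ ∫ x in Set.Icc (0:ℝ) 1, C * (realization H φ x - α)^2 :=
        setIntegral_mono_set (integrableOn_of_cont (by fun_prop) subset_rfl)
          (ae_of_all _ fun x => by positivity) hsub.eventuallyLE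
    _ = C * risk H α φ := by
        rw [setInt_Icc_eq_Ioc, integral_const_mul, ← risk_eq]

lemma norm_sq_eq_sum (ψ : EuclideanSpace ℝ (Fin (3*H+1))) : ‖ψ‖^2 = ∑ i, (ψ i)^2 := by
  rw [EuclideanSpace.norm_sq_eq]
  simp [Real.norm_eq_abs, sq_abs]

lemma grad_sq_le :
    ‖grad H α φ‖^2 + (grad H α φ ⟨3*H, by omega⟩)^2
      ≤ 8 * (lyap H α φ + 1) * risk H α φ := by
  classical
  have hNc : Continuous (realization H φ) := realization_cont
  have hL0 : 0 ≤ risk H α φ := risk_nonneg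
  set L := risk H α φ with hLdef
  -- component bounds
  have bw : ∀ (j : Fin H) (h : j.1 < 3*H+1),
      (grad H α φ ⟨j.1, h⟩)^2 ≤ (vp H φ j)^2 * (4*L) := by
    intro j h
    rw [grad_w]
    have key : (∫ x in actSet H φ j, x * (realization H φ x - α))^2 ≤ 1 * L := by
      refine sq_int_le_mul_risk (actSet_meas j) (actSet_subset j) (by fun_prop) one_pos.le ?_
      intro x hx
      obtain ⟨⟨hx0, hx1⟩, -⟩ := hx
      have hx2 : x^2 ≤ 1 := by nlinarith
      calc (x * (realization H φ x - α))^2 = x^2 * (realization H φ x - α)^2 := by ring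
        _ ≤ 1 * (realization H φ x - α)^2 :=
            mul_le_mul_of_nonneg_right hx2 (sq_nonneg _)
    nlinarith [sq_nonneg (vp H φ j)]
  have bb : ∀ (j : Fin H) (h : H + j.1 < 3*H+1),
      (grad H α φ ⟨H + j.1, h⟩)^2 ≤ (vp H φ j)^2 * (4*L) := by
    intro j h
    rw [grad_b]
    have key : (∫ x in actSet H φ j, (realization H φ x - α))^2 ≤ 1 * L := by
      refine sq_int_le_mul_risk (actSet_meas j) (actSet_subset j) (by fun_prop) one_pos.le ?_
      intro x _; nlinarith [sq_nonneg (realization H φ x - α)]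
    nlinarith [sq_nonneg (vp H φ j)]
  have bv : ∀ (j : Fin H) (h : 2*H + j.1 < 3*H+1),
      (grad H α φ ⟨2*H + j.1, h⟩)^2 ≤ ((wp H φ j)^2 + (bp H φ j)^2) * (8*L) := by
    intro j h
    rw [grad_v, intervalIntegral.integral_of_le (zero_le_one (α := ℝ))]
    have key : (∫ x in Set.Ioc (0:ℝ) 1,
          max (wp H φ j * x + bp H φ j) 0 * (realization H φ x - α))^2
        ≤ (2 * ((wp H φ j)^2 + (bp H φ j)^2)) * L := by
      refine sq_int_le_mul_risk measurableSet_Ioc Set.Ioc_subset_Icc_self (by fun_prop)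
        (by positivity) ?_
      intro x hx
      obtain ⟨hx0, hx1⟩ := hx
      have hmax : (max (wp H φ j * x + bp H φ j) 0)^2 ≤ (wp H φ j * x + bp H φ j)^2 := by
        rcases le_or_gt (wp H φ j * x + bp H φ j) 0 with hc | hc
        · rw [max_eq_right hc]; simpa using sq_nonneg _
        · rw [max_eq_left hc.le]
      have hx2 : x^2 ≤ 1 := by nlinarith
      have hsum : (wp H φ j * x + bp H φ j)^2 ≤ 2 * ((wp H φ j)^2 + (bp H φ j)^2) := by
        nlinarith [sq_nonneg (wp H φ j * x - bp H φ j), sq_nonneg (wp H φ j),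
          sq_nonneg (wp H φ j * x), sq_nonneg (bp H φ j)]
      nlinarith [sq_nonneg (realization H φ x - α), sq_nonneg (max (wp H φ j * x + bp H φ j) 0)]
    nlinarith
  have bc : ∀ (h : 3*H < 3*H+1), (grad H α φ ⟨3*H, h⟩)^2 ≤ 4 * L := by
    intro h
    rw [grad_c, intervalIntegral.integral_of_le (zero_le_one (α := ℝ))]
    have key : (∫ x in Set.Ioc (0:ℝ) 1, (realization H φ x - α))^2 ≤ 1 * L := by
      refine sq_int_le_mul_risk measurableSet_Ioc Set.Ioc_subset_Icc_self (by fun_prop)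
        one_pos.le ?_
      intro x _; nlinarith [sq_nonneg (realization H φ x - α)]
    nlinarith
  -- sum up
  have hsum : ∑ i, (grad H α φ i)^2
      ≤ (∑ j : Fin H, (vp H φ j)^2 * (4*L)) + (∑ j : Fin H, (vp H φ j)^2 * (4*L))
        + (∑ j : Fin H, ((wp H φ j)^2 + (bp H φ j)^2) * (8*L)) + 4 * L := by
    rw [sum_split H (fun i => (grad H α φ i)^2)]
    gcongr with j _ j _ j _
    · exact bw j (by omega)
    · exact bb j (by omega)
    · exact bv j (by omega)
    · exact bc (by omega)
  have hphi : ‖φ‖^2 = (∑ j : Fin H, (wp H φ j)^2) + (∑ j : Fin H, (bp H φ j)^2)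
      + (∑ j : Fin H, (vp H φ j)^2) + (cp H φ)^2 := by
    rw [norm_sq_eq_sum φ, sum_split H (fun i => (φ i)^2)]
    rfl
  have hlyap : (∑ j : Fin H, (wp H φ j)^2) + (∑ j : Fin H, (bp H φ j)^2)
      + (∑ j : Fin H, (vp H φ j)^2) ≤ lyap H α φ := by
    have : ‖φ‖^2 ≤ lyap H α φ := by
      rw [lyap]; nlinarith [sq_nonneg (cp H φ - 2*α)]
    nlinarith [sq_nonneg (cp H φ)]
  have e1 : ∑ j : Fin H, (vp H φ j)^2 * (4*L) = (∑ j : Fin H, (vp H φ j)^2) * (4*L) :=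
    (Finset.sum_mul _ _ _).symm
  have e2 : ∑ j : Fin H, ((wp H φ j)^2 + (bp H φ j)^2) * (8*L)
      = ((∑ j : Fin H, (wp H φ j)^2) + (∑ j : Fin H, (bp H φ j)^2)) * (8*L) := by
    rw [← Finset.sum_add_distrib, Finset.sum_mul]
  rw [norm_sq_eq_sum]
  have hGc := bc (by omega)
  have hvsq : 0 ≤ ∑ j : Fin H, (vp H φ j)^2 := Finset.sum_nonneg fun j _ => sq_nonneg _
  have hwsq : 0 ≤ ∑ j : Fin H, (wp H φ j)^2 := Finset.sum_nonneg fun j _ => sq_nonneg _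
  have hbsq : 0 ≤ ∑ j : Fin H, (bp H φ j)^2 := Finset.sum_nonneg fun j _ => sq_nonneg _
  rw [e1, e2] at hsum
  nlinarith [hsum, hGc, hlyap]

lemma lyap_nonneg : 0 ≤ lyap H α φ := by rw [lyap]; positivity

lemma norm_sq_le_lyap : ‖φ‖^2 ≤ lyap H α φ := by
  rw [lyap]; nlinarith [sq_nonneg (cp H φ - 2*α)]

lemma lyap_step (γ : ℝ) :
    lyap H α (φ - γ • grad H α φ) = lyap H α φ - 8*γ*risk H α φ
      + γ^2 * (‖grad H α φ‖^2 + (grad H α φ ⟨3*H, by omega⟩)^2) := by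
  have hcp : cp H (φ - γ • grad H α φ) = cp H φ - γ * grad H α φ ⟨3*H, by omega⟩ := by
    simp [cp, PiLp.sub_apply, PiLp.smul_apply, smul_eq_mul]
  have hnorm : ‖φ - γ • grad H α φ‖^2
      = ‖φ‖^2 - 2 * (γ * (inner ℝ φ (grad H α φ) : ℝ)) + γ^2 * ‖grad H α φ‖^2 := by
    rw [norm_sub_sq_real, real_inner_smul_right, norm_smul]
    simp [mul_pow, sq_abs]
    try ring
  have hkey := inner_grad_eq (φ := φ) (α := α)
  rw [lyap, lyap, hcp, hnorm]
  linear_combination (-2*γ) * hkey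

lemma lyap_decrease {γ V0 : ℝ} (hγ : 0 < γ) (hγs : γ ≤ (4*V0+2)⁻¹) (hV0 : 0 ≤ V0)
    (hV : lyap H α φ ≤ V0) :
    lyap H α (φ - γ • grad H α φ) ≤ lyap H α φ - 4*γ*risk H α φ := by
  have h1 := lyap_step (φ := φ) (α := α) γ
  have h2 := grad_sq_le (φ := φ) (α := α)
  have hL := risk_nonneg (φ := φ) (α := α)
  have hpos : (0:ℝ) < 4*V0+2 := by linarith
  have hγ2 : γ * (4*V0+2) ≤ 1 := by
    calc γ * (4*V0+2) ≤ (4*V0+2)⁻¹ * (4*V0+2) := by gcongr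
      _ = 1 := inv_mul_cancel₀ hpos.ne'
  have hA : γ * (8*(lyap H α φ + 1)) ≤ 4 := by nlinarith
  have hX : γ^2 * (‖grad H α φ‖^2 + (grad H α φ ⟨3*H, by omega⟩)^2)
      ≤ γ * (4 * risk H α φ) := by
    calc γ^2 * (‖grad H α φ‖^2 + (grad H α φ ⟨3*H, by omega⟩)^2)
        ≤ γ^2 * (8 * (lyap H α φ + 1) * risk H α φ) :=
          mul_le_mul_of_nonneg_left h2 (sq_nonneg γ)
      _ = γ * (γ * (8*(lyap H α φ + 1)) * risk H α φ) := by ring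
      _ ≤ γ * (4 * risk H α φ) := by
          refine mul_le_mul_of_nonneg_left ?_ hγ.le
          exact mul_le_mul_of_nonneg_right hA hL
  linarith

theorem gd_convergence (H : ℕ) (hH : 0 < H) (α : ℝ)
    (γ : ℝ) (hγ : 0 < γ)
    (Θ : ℕ → EuclideanSpace ℝ (Fin (3*H+1)))
    (hrec : ∀ n : ℕ, Θ (n+1) = Θ n - γ • grad H α (Θ n))
    (hγsmall : γ ≤ (4 * lyap H α (Θ 0) + 2)⁻¹) :
    (∀ n : ℕ, ‖Θ n‖ ≤ Real.sqrt (lyap H α (Θ 0))) ∧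
    Summable (fun n => risk H α (Θ n)) ∧
    (∑' n : ℕ, risk H α (Θ n)) ≤ lyap H α (Θ 0) / (4 * γ) ∧
    Filter.Tendsto (fun n => risk H α (Θ n)) Filter.atTop (nhds 0) := by
  set V0 := lyap H α (Θ 0) with hV0def
  have hV00 : 0 ≤ V0 := lyap_nonneg
  have hstep : ∀ n, lyap H α (Θ n) ≤ V0 →
      lyap H α (Θ (n+1)) ≤ lyap H α (Θ n) - 4*γ*risk H α (Θ n) := by
    intro n hn
    rw [hrec n]
    exact lyap_decrease hγ hγsmall hV00 hn
  have hle0 : ∀ n, lyap H α (Θ n) ≤ V0 := by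
    intro n
    induction n with
    | zero => exact le_refl _
    | succ n ih =>
      have h1 := hstep n ih
      have h2 : 0 ≤ risk H α (Θ n) := risk_nonneg
      nlinarith [mul_nonneg (mul_nonneg (by norm_num : (0:ℝ) ≤ 4) hγ.le) h2]
  have hdec : ∀ n, lyap H α (Θ (n+1)) ≤ lyap H α (Θ n) - 4*γ*risk H α (Θ n) :=
    fun n => hstep n (hle0 n)
  have htel : ∀ n, 4*γ * (∑ k ∈ Finset.range n, risk H α (Θ k)) ≤ V0 - lyap H α (Θ n) := by
    intro n
    induction n with
    | zero => simp [hV0def]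
    | succ n ih =>
      rw [Finset.sum_range_succ]
      have := hdec n
      nlinarith
  have hpartial : ∀ n, ∑ k ∈ Finset.range n, risk H α (Θ k) ≤ V0 / (4*γ) := by
    intro n
    rw [le_div_iff₀ (by positivity)]
    have h1 := htel n
    have h2 : 0 ≤ lyap H α (Θ n) := lyap_nonneg
    nlinarith
  have hsummable : Summable (fun n => risk H α (Θ n)) :=
    summable_of_sum_range_le (fun n => risk_nonneg) hpartial
  refine ⟨?_, hsummable, ?_, hsummable.tendsto_atTop_zero⟩
  · intro n
    have h1 : ‖Θ n‖^2 ≤ V0 := le_trans norm_sq_le_lyap (hle0 n)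
    calc ‖Θ n‖ = Real.sqrt (‖Θ n‖^2) := by rw [Real.sqrt_sq (norm_nonneg _)]
      _ ≤ Real.sqrt V0 := Real.sqrt_le_sqrt h1
  · exact Real.tsum_le_of_sum_range_le (fun n => risk_nonneg) hpartial
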